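/- A stochastic choice correspondence μ with an NSC representation has a nest-invariant NSC representation if and only if μ satisfies the probabilistic attention filter property: for x ∈ S and nonempty T ⊆ S\{x}, μ(T,S) = μ(T,S\{x}) whenever μ({x},S) = 0, μ(T,S) > 0, and μ(T,S\{x}) > 0. -/

import Mathlib

open Finset

variable {X : Type*} [Fintype X] [DecidableEq X]

def IsSCC (μ : Finset X → Finset X → ℝ) : Prop :=
  (∀ T S : Finset X, T ⊆ S → 0 ≤ μ T S ∧ μ T S ≤ 1) ∧
  (∀ S : Finset X, S.Nonempty →
      ∑ T ∈ S.powerset.filter (fun T => T.Nonempty), μ T S = 1) ∧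
  (∀ T S : Finset X, ¬ T ⊆ S → μ T S = 0)

def IsNSC (μ : Finset X → Finset X → ℝ) (q : ℕ) (N : Fin q → Finset X)
    (σ : Finset X → ℝ) : Prop :=
  (∀ i, (N i).Nonempty) ∧ (∀ i j, i ≠ j → Disjoint (N i) (N j)) ∧
  ((Finset.univ : Finset (Fin q)).biUnion N = (Finset.univ : Finset X)) ∧
  σ ∅ = 0 ∧ (∀ T : Finset X, T.Nonempty → 0 < σ T) ∧
  ∀ T S : Finset X, T.Nonempty → T ⊆ S →
    μ T S = ∑ i, (σ (N i ∩ S) / ∑ j, σ (N j ∩ S)) * (if T = N i ∩ S then 1 else 0)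

def NSCRep (μ : Finset X → Finset X → ℝ) : Prop := ∃ q N σ, IsNSC μ q N σ

/-- A nest-invariant NSC representation: the weighting function is constant on
nonempty subsets of each nest. -/
def NestInvRep (μ : Finset X → Finset X → ℝ) : Prop :=
  ∃ (q : ℕ) (N : Fin q → Finset X) (σ : Finset X → ℝ), IsNSC μ q N σ ∧
    ∀ (i : Fin q) (T T' : Finset X), T.Nonempty → T'.Nonempty →
      T ⊆ N i → T' ⊆ N i → σ T = σ T'

def ProbAttFilter (μ : Finset X → Finset X → ℝ) : Prop :=
  ∀ (x : X) (S T : Finset X), x ∈ S → T.Nonempty → T ⊆ S.erase x →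
    μ {x} S = 0 → 0 < μ T S → 0 < μ T (S.erase x) →
    μ T S = μ T (S.erase x)

section Aux

variable {q : ℕ} {N : Fin q → Finset X} {σ : Finset X → ℝ} {μ : Finset X → Finset X → ℝ}

lemma nest_unique (hdis : ∀ i j, i ≠ j → Disjoint (N i) (N j)) {T : Finset X}
    (hT : T.Nonempty) {i j : Fin q} (hi : T ⊆ N i) (hj : T ⊆ N j) : i = j := by
  by_contra h
  obtain ⟨y, hy⟩ := hT
  exact Finset.disjoint_left.mp (hdis i j h) (hi hy) (hj hy)

lemma sum_ind (hdis : ∀ i j, i ≠ j → Disjoint (N i) (N j)) {S T : Finset X}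
    (hT : T.Nonempty) (c : Fin q → ℝ) {i : Fin q} (hi : T = N i ∩ S) :
    ∑ j, c j * (if T = N j ∩ S then 1 else 0) = c i := by
  rw [Finset.sum_eq_single i]
  · rw [if_pos hi, mul_one]
  · intro j _ hj
    rw [if_neg, mul_zero]
    intro hTj
    exact hj (nest_unique hdis hT (hTj ▸ Finset.inter_subset_left)
      (hi ▸ Finset.inter_subset_left))
  · intro h; exact absurd (Finset.mem_univ i) h

lemma sigma_nonneg (hσ0 : σ ∅ = 0) (hσp : ∀ T : Finset X, T.Nonempty → 0 < σ T)
    (T : Finset X) : 0 ≤ σ T := by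
  rcases T.eq_empty_or_nonempty with h | h
  · rw [h, hσ0]
  · exact (hσp T h).le

lemma D_pos (hσ0 : σ ∅ = 0) (hσp : ∀ T : Finset X, T.Nonempty → 0 < σ T)
    {S : Finset X} {i : Fin q} (hi : (N i ∩ S).Nonempty) :
    0 < ∑ j, σ (N j ∩ S) :=
  Finset.sum_pos' (fun j _ => sigma_nonneg hσ0 hσp _) ⟨i, Finset.mem_univ i, hσp _ hi⟩

lemma mu_eq (hnsc : IsNSC μ q N σ) {S T : Finset X} (hT : T.Nonempty) {i : Fin q}
    (hi : T = N i ∩ S) : μ T S = σ (N i ∩ S) / ∑ j, σ (N j ∩ S) := by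
  obtain ⟨_, hdis, _, _, _, hform⟩ := hnsc
  rw [hform T S hT (hi ▸ Finset.inter_subset_right)]
  exact sum_ind hdis hT _ hi

lemma mu_pos (hnsc : IsNSC μ q N σ) {S T : Finset X} (hT : T.Nonempty) {i : Fin q}
    (hi : T = N i ∩ S) : 0 < μ T S := by
  rw [mu_eq hnsc hT hi]
  exact div_pos (hnsc.2.2.2.2.1 _ (hi ▸ hT))
    (D_pos hnsc.2.2.2.1 hnsc.2.2.2.2.1 (hi ▸ hT))

lemma mu_zero (hnsc : IsNSC μ q N σ) {S T : Finset X} (hT : T.Nonempty) (hTS : T ⊆ S)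
    (h : ∀ i, T ≠ N i ∩ S) : μ T S = 0 := by
  obtain ⟨_, _, _, _, _, hform⟩ := hnsc
  rw [hform T S hT hTS]
  exact Finset.sum_eq_zero fun i _ => by rw [if_neg (h i), mul_zero]

lemma exists_nest (hcov : (Finset.univ : Finset (Fin q)).biUnion N = (Finset.univ : Finset X))
    (x : X) : ∃ k, x ∈ N k := by
  have : x ∈ (Finset.univ : Finset (Fin q)).biUnion N := hcov ▸ Finset.mem_univ x
  obtain ⟨k, _, hk⟩ := Finset.mem_biUnion.mp this
  exact ⟨k, hk⟩

/-- Key claim: under the probabilistic attention filter, the weights on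
intersections are proportional to the weights on full nests. -/
lemma key_claim (hnsc : IsNSC μ q N σ) (hPAF : ProbAttFilter μ) :
    ∀ (S : Finset X) (i j : Fin q), (N i ∩ S).Nonempty → (N j ∩ S).Nonempty →
      σ (N i ∩ S) * σ (N j) = σ (N i) * σ (N j ∩ S) := by
  obtain ⟨hne, hdis, hcov, hσ0, hσp, hform⟩ := hnsc
  have hnsc' : IsNSC μ q N σ := ⟨hne, hdis, hcov, hσ0, hσp, hform⟩
  suffices h : ∀ (n : ℕ) (S : Finset X), ((Finset.univ : Finset X) \ S).card ≤ n →
      ∀ i j, (N i ∩ S).Nonempty → (N j ∩ S).Nonempty →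
      σ (N i ∩ S) * σ (N j) = σ (N i) * σ (N j ∩ S) by
    intro S; exact h _ S le_rfl
  intro n
  induction n with
  | zero =>
    intro S hS i j _ _
    have hSu : S = Finset.univ := le_antisymm (Finset.subset_univ S)
      (Finset.sdiff_eq_empty_iff_subset.mp (Finset.card_eq_zero.mp (Nat.le_zero.mp hS)))
    subst hSu
    simp [Finset.inter_univ, mul_comm]
  | succ n ih =>
    intro S hS i j hi hj
    by_cases hSu : S = Finset.univ
    · subst hSu; simp [Finset.inter_univ, mul_comm]
    · obtain ⟨x, _, hx⟩ := Finset.exists_of_ssubset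
        (lt_of_le_of_ne (Finset.subset_univ S) hSu)
      set Sp := insert x S with hSpdef
      have hxmem : x ∈ ((Finset.univ : Finset X) \ S) := by simp [hx]
      have hcardp : ((Finset.univ : Finset X) \ Sp).card ≤ n := by
        rw [hSpdef, Finset.sdiff_insert, Finset.card_erase_of_mem hxmem]
        omega
      have IH := ih Sp hcardp
      obtain ⟨k, hk⟩ := exists_nest hcov x
      have hjSp : ∀ j' : Fin q, j' ≠ k → N j' ∩ Sp = N j' ∩ S := by
        intro j' hj'
        refine Finset.inter_insert_of_notMem fun hxj' => ?_
        exact hj' (nest_unique hdis ⟨x, Finset.mem_singleton_self x⟩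
          (Finset.singleton_subset_iff.mpr hxj') (Finset.singleton_subset_iff.mpr hk))
      by_cases hex : ∃ i₀, i₀ ≠ k ∧ (N i₀ ∩ S).Nonempty
      · obtain ⟨i₀, hi₀k, hi₀⟩ := hex
        by_cases hkS : (N k ∩ S).Nonempty
        · -- use PAF to show σ (N k ∩ Sp) = σ (N k ∩ S)
          have hxSp : x ∈ Sp := Finset.mem_insert_self x S
          have heS : Sp.erase x = S := Finset.erase_insert hx
          have hTp : N i₀ ∩ S = N i₀ ∩ Sp := (hjSp i₀ hi₀k).symm
          have hμx : μ {x} Sp = 0 := by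
            refine mu_zero hnsc' ⟨x, Finset.mem_singleton_self x⟩
              (Finset.singleton_subset_iff.mpr hxSp) fun j' hj' => ?_
            have hxj' : x ∈ N j' ∩ Sp := hj' ▸ Finset.mem_singleton_self x
            have hj'k : j' = k := nest_unique hdis ⟨x, Finset.mem_singleton_self x⟩
              (Finset.singleton_subset_iff.mpr (Finset.mem_inter.mp hxj').1)
              (Finset.singleton_subset_iff.mpr hk)
            subst hj'k
            obtain ⟨y, hy⟩ := hkS
            have hySp : y ∈ N j' ∩ Sp :=
              Finset.mem_inter.mpr ⟨(Finset.mem_inter.mp hy).1,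
                Finset.mem_insert_of_mem (Finset.mem_inter.mp hy).2⟩
            rw [← hj', Finset.mem_singleton] at hySp
            exact hx (hySp ▸ (Finset.mem_inter.mp hy).2)
          have hμTp : 0 < μ (N i₀ ∩ S) Sp := mu_pos hnsc' hi₀ hTp
          have hμTS : 0 < μ (N i₀ ∩ S) S := mu_pos hnsc' hi₀ rfl
          have hpaf := hPAF x Sp (N i₀ ∩ S) hxSp hi₀
            (by rw [heS]; exact Finset.inter_subset_right) hμx hμTp (by rw [heS]; exact hμTS)
          rw [heS, mu_eq hnsc' hi₀ hTp, mu_eq hnsc' hi₀ rfl, ← hTp] at hpaf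
          have hDeq : (∑ j', σ (N j' ∩ Sp)) = ∑ j', σ (N j' ∩ S) := by
            have ha := hσp _ hi₀
            have hb := D_pos hσ0 hσp (S := Sp) (i := i₀) (hTp ▸ hi₀)
            have hc := D_pos hσ0 hσp (S := S) (i := i₀) hi₀
            field_simp at hpaf
            linarith
          have hkeq : σ (N k ∩ Sp) = σ (N k ∩ S) := by
            have h1 : σ (N k ∩ Sp) + ∑ j' ∈ Finset.univ.erase k, σ (N j' ∩ Sp)
                = ∑ j', σ (N j' ∩ Sp) :=
              Finset.add_sum_erase _ (fun j' => σ (N j' ∩ Sp)) (Finset.mem_univ k)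
            have h2 : σ (N k ∩ S) + ∑ j' ∈ Finset.univ.erase k, σ (N j' ∩ S)
                = ∑ j', σ (N j' ∩ S) :=
              Finset.add_sum_erase _ (fun j' => σ (N j' ∩ S)) (Finset.mem_univ k)
            have h3 : ∑ j' ∈ Finset.univ.erase k, σ (N j' ∩ Sp)
                = ∑ j' ∈ Finset.univ.erase k, σ (N j' ∩ S) :=
              Finset.sum_congr rfl fun j' hj' => by rw [hjSp j' (Finset.ne_of_mem_erase hj')]
            rw [h3] at h1
            linarith [hDeq]
          have main : ∀ i', (N i' ∩ S).Nonempty →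
              σ (N i' ∩ S) = σ (N i' ∩ Sp) ∧ (N i' ∩ Sp).Nonempty := by
            intro i' hi'
            by_cases hik : i' = k
            · subst hik
              refine ⟨hkeq.symm, ?_⟩
              obtain ⟨y, hy⟩ := hi'
              exact ⟨y, Finset.mem_inter.mpr ⟨(Finset.mem_inter.mp hy).1,
                Finset.mem_insert_of_mem (Finset.mem_inter.mp hy).2⟩⟩
            · rw [hjSp i' hik]; exact ⟨rfl, hi'⟩
          obtain ⟨hieq, hip⟩ := main i hi
          obtain ⟨hjeq, hjp⟩ := main j hj
          calc σ (N i ∩ S) * σ (N j) = σ (N i ∩ Sp) * σ (N j) := by rw [hieq]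
            _ = σ (N i) * σ (N j ∩ Sp) := IH i j hip hjp
            _ = σ (N i) * σ (N j ∩ S) := by rw [hjeq]
        · -- N k ∩ S = ∅ : all relevant nests untouched
          have hik : i ≠ k := fun h => hkS (h ▸ hi)
          have hjk : j ≠ k := fun h => hkS (h ▸ hj)
          rw [← hjSp i hik, ← hjSp j hjk]
          exact IH i j (by rw [hjSp i hik]; exact hi) (by rw [hjSp j hjk]; exact hj)
      · push_neg at hex
        have hik : i = k := by
          by_contra h; exact absurd hi (Finset.not_nonempty_iff_eq_empty.mpr (hex i h))
        have hjk : j = k := by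
          by_contra h; exact absurd hj (Finset.not_nonempty_iff_eq_empty.mpr (hex j h))
        subst hik; subst hjk
        ring

end Aux

open Classical in
/-- The nest-invariant weighting: a nonempty set contained in a nest gets the
weight of that nest; other sets get an arbitrary value. -/
noncomputable def nestWeight {q : ℕ} (N : Fin q → Finset X) (σ : Finset X → ℝ)
    (T : Finset X) : ℝ :=
  if h : T.Nonempty ∧ ∃ i, T ⊆ N i then σ (N h.2.choose)
  else if T = ∅ then 0 else 1

section Aux2

variable {q : ℕ} {N : Fin q → Finset X} {σ : Finset X → ℝ}

lemma nestWeight_empty : nestWeight N σ ∅ = 0 := by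
  rw [nestWeight, dif_neg, if_pos rfl]
  rintro ⟨h, -⟩
  exact h.ne_empty rfl

lemma nestWeight_eq (hdis : ∀ i j, i ≠ j → Disjoint (N i) (N j)) {T : Finset X}
    (hT : T.Nonempty) {i : Fin q} (hTi : T ⊆ N i) : nestWeight N σ T = σ (N i) := by
  have h : T.Nonempty ∧ ∃ i, T ⊆ N i := ⟨hT, i, hTi⟩
  rw [nestWeight, dif_pos h]
  congr 1
  exact congrArg N (nest_unique hdis hT h.2.choose_spec hTi)

lemma nestWeight_pos (hne : ∀ i, (N i).Nonempty)
    (hσp : ∀ T : Finset X, T.Nonempty → 0 < σ T) {T : Finset X} (hT : T.Nonempty) :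
    0 < nestWeight N σ T := by
  rw [nestWeight]
  split
  · exact hσp _ (hne _)
  · rw [if_neg hT.ne_empty]; exact one_pos

end Aux2

theorem nestInv_iff_paf (μ : Finset X → Finset X → ℝ)
    (hcard : 3 ≤ Fintype.card X) (hμ : IsSCC μ) (hnsc : NSCRep μ) :
    NestInvRep μ ↔ ProbAttFilter μ := by
  constructor
  · -- nest-invariant representation implies PAF
    rintro ⟨q, N, σ, hrep, hinv⟩ x S T hxS hT hTsub h0 hpos hpos'
    obtain ⟨hne, hdis, hcov, hσ0, hσp, hform⟩ := hrep
    have hrep' : IsNSC μ q N σ := ⟨hne, hdis, hcov, hσ0, hσp, hform⟩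
    -- T = N i ∩ S for some i
    have hTi : ∃ i, T = N i ∩ S := by
      by_contra h
      push_neg at h
      rw [mu_zero hrep' hT (hTsub.trans (Finset.erase_subset x S)) h] at hpos
      exact lt_irrefl 0 hpos
    obtain ⟨i, hTi⟩ := hTi
    obtain ⟨k, hk⟩ := exists_nest hcov x
    have hik : i ≠ k := by
      rintro rfl
      have : x ∈ T := hTi ▸ Finset.mem_inter.mpr ⟨hk, hxS⟩
      exact (Finset.mem_erase.mp (hTsub this)).1 rfl
    -- N k ∩ S ≠ {x}
    have hkx : N k ∩ S ≠ {x} := by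
      intro h
      have : 0 < μ {x} S := mu_pos hrep' ⟨x, Finset.mem_singleton_self x⟩ h.symm
      rw [h0] at this
      exact lt_irrefl 0 this
    have hxkS : x ∈ N k ∩ S := Finset.mem_inter.mpr ⟨hk, hxS⟩
    have hkerase : ((N k ∩ S).erase x).Nonempty := by
      by_contra h
      rw [Finset.not_nonempty_iff_eq_empty] at h
      apply hkx
      apply Finset.eq_singleton_iff_unique_mem.mpr
      exact ⟨hxkS, fun y hy => by
        by_contra hyx
        exact absurd (Finset.mem_erase.mpr ⟨hyx, hy⟩) (h ▸ Finset.notMem_empty y)⟩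
    -- intersections with S.erase x
    have hinterase : ∀ j, N j ∩ S.erase x = if j = k then (N k ∩ S).erase x else N j ∩ S := by
      intro j
      rw [Finset.inter_erase]
      split
      · next h => rw [h]
      · next h =>
        refine Finset.erase_eq_of_notMem fun hxj => ?_
        exact h (nest_unique hdis ⟨x, Finset.mem_singleton_self x⟩
          (Finset.singleton_subset_iff.mpr (Finset.mem_inter.mp hxj).1)
          (Finset.singleton_subset_iff.mpr hk))
    have hTi' : T = N i ∩ S.erase x := by
      rw [hinterase i, if_neg hik, hTi]
    -- denominators agree, using nest-invariance on nest k
    have hDeq : (∑ j, σ (N j ∩ S.erase x)) = ∑ j, σ (N j ∩ S) := by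
      refine Finset.sum_congr rfl fun j _ => ?_
      rw [hinterase j]
      split
      · next h =>
        subst h
        exact hinv j _ _ hkerase ⟨x, hxkS⟩
          ((Finset.erase_subset x _).trans Finset.inter_subset_left)
          Finset.inter_subset_left
      · rfl
    rw [mu_eq hrep' hT hTi, mu_eq hrep' hT hTi', ← hTi, ← hTi', hDeq]
  · -- PAF implies a nest-invariant representation
    intro hPAF
    obtain ⟨q, N, σ, hrep⟩ := hnsc
    obtain ⟨hne, hdis, hcov, hσ0, hσp, hform⟩ := hrep
    have hrep' : IsNSC μ q N σ := ⟨hne, hdis, hcov, hσ0, hσp, hform⟩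
    have hkey := key_claim hrep' hPAF
    refine ⟨q, N, nestWeight N σ, ⟨hne, hdis, hcov, nestWeight_empty,
      fun T hT => nestWeight_pos hne hσp hT, ?_⟩, ?_⟩
    · -- the formula with the new weights
      intro T S hT hTS
      by_cases hex : ∃ i, T = N i ∩ S
      · obtain ⟨i, hi⟩ := hex
        rw [sum_ind hdis hT _ hi, mu_eq hrep' hT hi]
        have hiNe : (N i ∩ S).Nonempty := hi ▸ hT
        have hD : (0:ℝ) < ∑ j, σ (N j ∩ S) := D_pos hσ0 hσp hiNe
        have hD' : (0:ℝ) < ∑ j, nestWeight N σ (N j ∩ S) :=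
          Finset.sum_pos' (fun j _ => by
            rcases (N j ∩ S).eq_empty_or_nonempty with h | h
            · rw [h, nestWeight_empty]
            · exact (nestWeight_pos hne hσp h).le)
            ⟨i, Finset.mem_univ i, nestWeight_pos hne hσp hiNe⟩
        rw [div_eq_div_iff (ne_of_gt hD) (ne_of_gt hD'), Finset.mul_sum, Finset.mul_sum]
        refine Finset.sum_congr rfl fun j _ => ?_
        rcases (N j ∩ S).eq_empty_or_nonempty with h | h
        · rw [h, nestWeight_empty, hσ0, mul_zero, mul_zero]
        · rw [nestWeight_eq hdis h Finset.inter_subset_left,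
            nestWeight_eq hdis hiNe Finset.inter_subset_left]
          exact hkey S i j hiNe h
      · push_neg at hex
        rw [mu_zero hrep' hT hTS hex]
        exact (Finset.sum_eq_zero fun i _ => by rw [if_neg (hex i), mul_zero]).symm
    · -- nest-invariance
      intro i T T' hT hT' hTi hT'i
      rw [nestWeight_eq hdis hT hTi, nestWeight_eq hdis hT' hT'i]
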